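/- arXiv:2003.04827 — 3 statements merged into one kernel-verified Lean document; each statement's English description precedes it below -/
import Mathlib

section
/- The category whose objects are polynomial functors FintypeCat ⥤ FintypeCat and whose morphisms are cartesian natural transformations is equivalent to the category whose objects are Dirichlet functors FintypeCatᵒᵖ ⥤ FintypeCat and whose morphisms are cartesian natural transformations. -/
/- STATEMENT 6: The category whose objects are polynomial functors `FintypeCat ⥤ FintypeCat`
and whose morphisms are cartesian natural transformations is equivalent to the category whose
objects are Dirichlet functors `FintypeCatᵒᵖ ⥤ FintypeCat` and whose morphisms are cartesian
natural transformations. -/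

open CategoryTheory CategoryTheory.Limits Opposite

noncomputable section

noncomputable instance (X Y : FintypeCat.{0}) : Fintype (X ⟶ Y) := by
  classical exact Fintype.ofFinite (X ⟶ Y)

/-- The finite coproduct `∐ᵢ Fin(kᵢ, –)` of corepresentable functors `FintypeCat ⥤ FintypeCat`. -/
def polySum {I : Type} [Fintype I] (k : I → FintypeCat.{0}) :
    FintypeCat.{0} ⥤ FintypeCat.{0} where
  obj X := FintypeCat.of (Σ i, (k i ⟶ X))
  map f := FintypeCat.homMk (fun x => ⟨x.1, x.2 ≫ f⟩)

/-- The finite coproduct `∐ᵢ Fin(–, dᵢ)` of representable presheaves `FintypeCatᵒᵖ ⥤ FintypeCat`. -/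
def dirichletSum {I : Type} [Fintype I] (d : I → FintypeCat.{0}) :
    FintypeCat.{0}ᵒᵖ ⥤ FintypeCat.{0} where
  obj X := FintypeCat.of (Σ i, (X.unop ⟶ d i))
  map f := FintypeCat.homMk (fun x => ⟨x.1, f.unop ≫ x.2⟩)

/-- A polynomial functor is a finite coproduct of corepresentables. -/
def IsPolynomial (P : FintypeCat.{0} ⥤ FintypeCat.{0}) : Prop :=
  ∃ (I : Type) (_ : Fintype I) (k : I → FintypeCat.{0}), Nonempty (P ≅ polySum k)

/-- A Dirichlet functor is a finite coproduct of representable presheaves. -/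
def IsDirichlet (D : FintypeCat.{0}ᵒᵖ ⥤ FintypeCat.{0}) : Prop :=
  ∃ (I : Type) (_ : Fintype I) (d : I → FintypeCat.{0}), Nonempty (D ≅ dirichletSum d)

/-- A natural transformation is cartesian when all of its naturality squares are pullbacks. -/
def Cartesian {C D : Type*} [Category C] [Category D] {F G : C ⥤ D} (f : F ⟶ G) : Prop :=
  ∀ ⦃X Y : C⦄ (g : X ⟶ Y), IsPullback (f.app X) (F.map g) (G.map g) (f.app Y)

/-- Objects: polynomial functors. -/
structure PolyCart where
  func : FintypeCat.{0} ⥤ FintypeCat.{0}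
  isPoly : IsPolynomial func

/-- Objects: Dirichlet functors. -/
structure DirCart where
  func : FintypeCat.{0}ᵒᵖ ⥤ FintypeCat.{0}
  isDir : IsDirichlet func

/-- The category of polynomial functors and cartesian natural transformations. -/
instance : Category PolyCart where
  Hom A B := {f : A.func ⟶ B.func // Cartesian f}
  id A := ⟨𝟙 A.func, fun X Y g => by
    simp only [NatTrans.id_app]
    exact IsPullback.of_horiz_isIso ⟨by simp⟩⟩
  comp f g := ⟨f.1 ≫ g.1, fun X Y h => by
    simp only [NatTrans.comp_app]
    exact (f.2 h).paste_horiz (g.2 h)⟩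
  id_comp f := Subtype.ext (Category.id_comp _)
  comp_id f := Subtype.ext (Category.comp_id _)
  assoc f g h := Subtype.ext (Category.assoc _ _ _)

/-- The category of Dirichlet functors and cartesian natural transformations. -/
instance : Category DirCart where
  Hom A B := {f : A.func ⟶ B.func // Cartesian f}
  id A := ⟨𝟙 A.func, fun X Y g => by
    simp only [NatTrans.id_app]
    exact IsPullback.of_horiz_isIso ⟨by simp⟩⟩
  comp f g := ⟨f.1 ≫ g.1, fun X Y h => by
    simp only [NatTrans.comp_app]
    exact (f.2 h).paste_horiz (g.2 h)⟩
  id_comp f := Subtype.ext (Category.id_comp _)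
  comp_id f := Subtype.ext (Category.comp_id _)
  assoc f g h := Subtype.ext (Category.assoc _ _ _)

/-! Auxiliary development: the category of "bundles" and the two equivalences. -/

section Aux
open CategoryTheory CategoryTheory.Limits Opposite

lemma isPullback_of_exists_unique {P X Y Z : FintypeCat.{0}} (fst : P ⟶ X) (snd : P ⟶ Y)
    (f : X ⟶ Z) (g : Y ⟶ Z) (comm : ∀ p, f (fst p) = g (snd p))
    (ex : ∀ x y, f x = g y → ∃! p, fst p = x ∧ snd p = y) :
    IsPullback fst snd f g := by
  have w : fst ≫ f = snd ≫ g := FintypeCat.hom_ext _ _ comm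
  refine IsPullback.of_isLimit' ⟨w⟩ ?_
  refine PullbackCone.IsLimit.mk w
    (fun s => FintypeCat.homMk fun a =>
      (ex (s.fst a) (s.snd a) (ConcreteCategory.congr_hom s.condition a)).choose) ?_ ?_ ?_
  · intro s; ext a; exact ((ex (s.fst a) (s.snd a) (ConcreteCategory.congr_hom s.condition a)).choose_spec).1.1
  · intro s; ext a; exact ((ex (s.fst a) (s.snd a) (ConcreteCategory.congr_hom s.condition a)).choose_spec).1.2
  · intro s m h1 h2; ext a
    exact ((ex (s.fst a) (s.snd a) (ConcreteCategory.congr_hom s.condition a)).choose_spec).2 (m a)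
      ⟨ConcreteCategory.congr_hom h1 a, ConcreteCategory.congr_hom h2 a⟩

lemma pullback_exists_unique {P X Y Z : FintypeCat.{0}} {fst : P ⟶ X} {snd : P ⟶ Y}
    {f : X ⟶ Z} {g : Y ⟶ Z} (h : IsPullback fst snd f g) (x : X) (y : Y) (hxy : f x = g y) :
    ∃! p, fst p = x ∧ snd p = y := by
  classical
  let pt : FintypeCat.{0} := FintypeCat.of PUnit
  let a : pt ⟶ X := FintypeCat.homMk fun _ => x
  let b : pt ⟶ Y := FintypeCat.homMk fun _ => y
  have hw : a ≫ f = b ≫ g := FintypeCat.hom_ext _ _ fun _ => hxy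
  refine ⟨h.lift a b hw PUnit.unit,
    ⟨ConcreteCategory.congr_hom (h.lift_fst a b hw) _, ConcreteCategory.congr_hom (h.lift_snd a b hw) _⟩, ?_⟩
  intro q hq
  have := h.hom_ext (k := (FintypeCat.homMk fun _ => q : pt ⟶ P)) (l := h.lift a b hw) ?_ ?_
  · exact ConcreteCategory.congr_hom this PUnit.unit
  · rw [h.lift_fst]; exact FintypeCat.hom_ext _ _ fun _ => hq.1
  · rw [h.lift_snd]; exact FintypeCat.hom_ext _ _ fun _ => hq.2

/-- The category of finite families of finite sets. -/
structure Bun where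
  I : Type
  [fin : Fintype I]
  k : I → FintypeCat.{0}

attribute [instance] Bun.fin

structure BunHom (A B : Bun) where
  φ : A.I → B.I
  e : ∀ i, B.k (φ i) ≅ A.k i

theorem BunHom.ext' {A B : Bun} {f g : BunHom A B} (h1 : f.φ = g.φ)
    (h2 : ∀ i, HEq (f.e i).hom (g.e i).hom) : f = g := by
  obtain ⟨φ₁, e₁⟩ := f; obtain ⟨φ₂, e₂⟩ := g
  dsimp at h1 h2
  subst h1
  simp only [heq_iff_eq] at h2
  exact congrArg _ (funext fun i => Iso.ext (h2 i))

lemma iso_ext_inv {C : Type*} [CategoryTheory.Category C] {X Y : C} {a b : X ≅ Y}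
    (h : a.inv = b.inv) : a = b :=
  Iso.ext (by rw [← Category.comp_id a.hom, ← b.inv_hom_id, ← h, a.hom_inv_id_assoc])

theorem BunHom.ext'' {A B : Bun} {f g : BunHom A B} (h1 : f.φ = g.φ)
    (h2 : ∀ i, HEq (f.e i).inv (g.e i).inv) : f = g := by
  obtain ⟨φ₁, e₁⟩ := f; obtain ⟨φ₂, e₂⟩ := g
  dsimp at h1 h2
  subst h1
  simp only [heq_iff_eq] at h2
  exact congrArg _ (funext fun i => iso_ext_inv (h2 i))

instance : Category Bun where
  Hom := BunHom
  id A := ⟨id, fun _ => Iso.refl _⟩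
  comp f g := ⟨g.φ ∘ f.φ, fun i => g.e (f.φ i) ≪≫ f.e i⟩
  id_comp f := BunHom.ext' rfl (fun i => heq_of_eq (by simp))
  comp_id f := BunHom.ext' rfl (fun i => heq_of_eq (by simp))
  assoc f g h := BunHom.ext' rfl (fun i => heq_of_eq (by simp))

@[simp] lemma bun_comp_φ {A B C : Bun} (f : A ⟶ B) (g : B ⟶ C) :
    (f ≫ g).φ = g.φ ∘ f.φ := rfl
@[simp] lemma bun_comp_e {A B C : Bun} (f : A ⟶ B) (g : B ⟶ C) (i : A.I) :
    (f ≫ g).e i = g.e (f.φ i) ≪≫ f.e i := rfl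

/-! ### The polynomial side -/

def polyMap {A B : Bun} (f : A ⟶ B) : polySum A.k ⟶ polySum B.k where
  app X := FintypeCat.homMk fun (x : Σ i, (A.k i ⟶ X)) => ⟨f.φ x.1, (f.e x.1).hom ≫ x.2⟩
  naturality X Y h := FintypeCat.hom_ext _ _ fun _ => rfl

lemma polyMap_cartesian {A B : Bun} (f : A ⟶ B) : Cartesian (polyMap f) := by
  intro X Y h
  apply isPullback_of_exists_unique
  · intro p; rfl
  · rintro ⟨j, u⟩ ⟨i, v⟩ hc
    obtain ⟨rfl, hc⟩ := Sigma.mk.inj_iff.mp hc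
    rw [heq_iff_eq] at hc
    refine ⟨⟨i, (f.e i).inv ≫ u⟩, ⟨?_, ?_⟩, ?_⟩
    · exact congrArg (Sigma.mk (f.φ i)) (by simp)
    · exact congrArg (Sigma.mk i) (by rw [Category.assoc, hc, Iso.inv_hom_id_assoc])
    · rintro ⟨i', w⟩ ⟨ha, hb⟩
      obtain ⟨rfl, hb⟩ := Sigma.mk.inj_iff.mp hb
      rw [heq_iff_eq] at hb
      have ha' : (f.e i').hom ≫ w = u := by
        have := (Sigma.mk.inj_iff.mp ha).2
        rwa [heq_iff_eq] at this
      exact congrArg (Sigma.mk i') (by rw [← ha', Iso.inv_hom_id_assoc])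

def toPoly : Bun ⥤ PolyCart where
  obj A := ⟨polySum A.k, A.I, A.fin, A.k, ⟨Iso.refl _⟩⟩
  map f := ⟨polyMap f, polyMap_cartesian f⟩
  map_id A := rfl
  map_comp f g := rfl

lemma poly_nat {A B : Bun} (α : polySum A.k ⟶ polySum B.k) (X : FintypeCat.{0})
    (i : A.I) (g : A.k i ⟶ X) :
    α.app X ⟨i, g⟩ = ⟨(α.app (A.k i) ⟨i, 𝟙 _⟩).1, (α.app (A.k i) ⟨i, 𝟙 _⟩).2 ≫ g⟩ :=
  ConcreteCategory.congr_hom (α.naturality g) ⟨i, 𝟙 _⟩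

instance : toPoly.Faithful := by
  constructor
  intro A B f g h
  replace h := congrArg Subtype.val h
  have key : ∀ i : A.I, (Sigma.mk (f.φ i) (f.e i).hom : Σ j, (B.k j ⟶ A.k i))
      = ⟨g.φ i, (g.e i).hom⟩ := fun i =>
    ConcreteCategory.congr_hom (congrArg (fun α => NatTrans.app α (A.k i)) h) ⟨i, 𝟙 _⟩
  exact BunHom.ext' (funext fun i => (Sigma.mk.inj_iff.mp (key i)).1)
    (fun i => (Sigma.mk.inj_iff.mp (key i)).2)

instance : toPoly.Full := by
  constructor
  rintro A B ⟨α, hα⟩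
  set φ : A.I → B.I := fun i => (α.app (A.k i) ⟨i, 𝟙 _⟩).1 with hφ
  set fh : ∀ i, B.k (φ i) ⟶ A.k i := fun i => (α.app (A.k i) ⟨i, 𝟙 _⟩).2 with hfh
  have hexinv : ∀ i, ∃ w : A.k i ⟶ B.k (φ i), fh i ≫ w = 𝟙 _ ∧ w ≫ fh i = 𝟙 _ := by
    intro i
    have hpb := hα (fh i)
    have heta : α.app (A.k i) ⟨i, 𝟙 _⟩ = ⟨φ i, fh i⟩ := rfl
    have compat : (polySum B.k).map (fh i) ⟨φ i, 𝟙 _⟩ = α.app (A.k i) ⟨i, 𝟙 _⟩ := by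
      rw [heta]; exact congrArg (Sigma.mk (φ i)) (Category.id_comp _)
    obtain ⟨p, ⟨h1, h2⟩, -⟩ := pullback_exists_unique hpb ⟨φ i, 𝟙 _⟩ ⟨i, 𝟙 _⟩ compat
    obtain ⟨i', w⟩ := p
    have h2' : (Sigma.mk i' (w ≫ fh i) : Σ j, (A.k j ⟶ A.k i)) = ⟨i, 𝟙 _⟩ := h2
    obtain ⟨rfl, h2''⟩ := Sigma.mk.inj_iff.mp h2'
    rw [heq_iff_eq] at h2''
    have h1' : (Sigma.mk (φ i') (fh i' ≫ w) : Σ j, (B.k j ⟶ B.k (φ i'))) = ⟨φ i', 𝟙 _⟩ :=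
      (poly_nat α _ i' w).symm.trans h1
    have h1'' := (Sigma.mk.inj_iff.mp h1').2
    rw [heq_iff_eq] at h1''
    exact ⟨w, h1'', h2''⟩
  choose w hw1 hw2 using hexinv
  refine ⟨⟨φ, fun i => ⟨fh i, w i, hw1 i, hw2 i⟩⟩, ?_⟩
  apply Subtype.ext
  apply NatTrans.ext
  funext X
  apply FintypeCat.hom_ext
  intro x
  obtain ⟨i, g⟩ := x
  exact (poly_nat α X i g).symm

lemma cartesian_of_iso {C D : Type*} [Category C] [Category D] {F G : C ⥤ D} (α : F ≅ G) :
    Cartesian α.hom := fun X Y g => by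
  exact IsPullback.of_horiz_isIso ⟨(α.hom.naturality g).symm⟩

def cartIsoPoly {P Q : FintypeCat.{0} ⥤ FintypeCat.{0}} (α : P ≅ Q)
    (hP : IsPolynomial P) (hQ : IsPolynomial Q) :
    (⟨P, hP⟩ : PolyCart) ≅ ⟨Q, hQ⟩ where
  hom := ⟨α.hom, cartesian_of_iso α⟩
  inv := ⟨α.inv, cartesian_of_iso α.symm⟩
  hom_inv_id := Subtype.ext α.hom_inv_id
  inv_hom_id := Subtype.ext α.inv_hom_id

instance : toPoly.EssSurj := by
  constructor
  rintro ⟨P, hP⟩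
  obtain ⟨I, fI, k, ⟨ι⟩⟩ := hP
  exact ⟨@Bun.mk I fI k, ⟨cartIsoPoly ι.symm _ _⟩⟩

instance : toPoly.IsEquivalence := { }

/-! ### The Dirichlet side -/

def dirMap {A B : Bun} (f : A ⟶ B) : dirichletSum A.k ⟶ dirichletSum B.k where
  app X := FintypeCat.homMk fun (x : Σ i, (X.unop ⟶ A.k i)) => ⟨f.φ x.1, x.2 ≫ (f.e x.1).inv⟩
  naturality X Y h := FintypeCat.hom_ext _ _ fun _ => rfl

lemma dirMap_cartesian {A B : Bun} (f : A ⟶ B) : Cartesian (dirMap f) := by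
  intro X Y h
  apply isPullback_of_exists_unique
  · intro p; rfl
  · rintro ⟨j, u⟩ ⟨i, v⟩ hc
    obtain ⟨rfl, hc⟩ := Sigma.mk.inj_iff.mp hc
    rw [heq_iff_eq] at hc
    refine ⟨⟨i, u ≫ (f.e i).hom⟩, ⟨?_, ?_⟩, ?_⟩
    · exact congrArg (Sigma.mk (f.φ i)) (by simp)
    · exact congrArg (Sigma.mk i)
        (by rw [← Category.assoc, hc, Category.assoc, Iso.inv_hom_id, Category.comp_id])
    · rintro ⟨i', w⟩ ⟨ha, hb⟩
      obtain ⟨rfl, hb⟩ := Sigma.mk.inj_iff.mp hb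
      rw [heq_iff_eq] at hb
      have ha' : w ≫ (f.e i').inv = u := by
        have := (Sigma.mk.inj_iff.mp ha).2
        rwa [heq_iff_eq] at this
      exact congrArg (Sigma.mk i')
        (by rw [← ha', Category.assoc, Iso.inv_hom_id, Category.comp_id])

def toDir : Bun ⥤ DirCart where
  obj A := ⟨dirichletSum A.k, A.I, A.fin, A.k, ⟨Iso.refl _⟩⟩
  map f := ⟨dirMap f, dirMap_cartesian f⟩
  map_id A := rfl
  map_comp f g := rfl

lemma dir_nat {A B : Bun} (α : dirichletSum A.k ⟶ dirichletSum B.k) (X : FintypeCat.{0})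
    (i : A.I) (g : X ⟶ A.k i) :
    α.app (op X) ⟨i, g⟩
      = ⟨(α.app (op (A.k i)) ⟨i, 𝟙 _⟩).1, g ≫ (α.app (op (A.k i)) ⟨i, 𝟙 _⟩).2⟩ :=
  ConcreteCategory.congr_hom (α.naturality g.op) ⟨i, 𝟙 _⟩

instance : toDir.Faithful := by
  constructor
  intro A B f g h
  replace h := congrArg Subtype.val h
  have key : ∀ i : A.I, (Sigma.mk (f.φ i) (f.e i).inv : Σ j, (A.k i ⟶ B.k j))
      = ⟨g.φ i, (g.e i).inv⟩ := fun i =>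
    ConcreteCategory.congr_hom (congrArg (fun α => NatTrans.app α (op (A.k i))) h) ⟨i, 𝟙 _⟩
  exact BunHom.ext'' (funext fun i => (Sigma.mk.inj_iff.mp (key i)).1)
    (fun i => (Sigma.mk.inj_iff.mp (key i)).2)

instance : toDir.Full := by
  constructor
  rintro A B ⟨α, hα⟩
  set φ : A.I → B.I := fun i => (α.app (op (A.k i)) ⟨i, 𝟙 _⟩).1 with hφ
  set fh : ∀ i, A.k i ⟶ B.k (φ i) := fun i => (α.app (op (A.k i)) ⟨i, 𝟙 _⟩).2 with hfh
  have hexinv : ∀ i, ∃ w : B.k (φ i) ⟶ A.k i, w ≫ fh i = 𝟙 _ ∧ fh i ≫ w = 𝟙 _ := by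
    intro i
    have hpb := hα (fh i).op
    have heta : α.app (op (A.k i)) ⟨i, 𝟙 _⟩ = ⟨φ i, fh i⟩ := rfl
    have compat : (dirichletSum B.k).map (fh i).op ⟨φ i, 𝟙 _⟩ = α.app (op (A.k i)) ⟨i, 𝟙 _⟩ := by
      rw [heta]; exact congrArg (Sigma.mk (φ i)) (Category.comp_id _)
    obtain ⟨p, ⟨h1, h2⟩, -⟩ := pullback_exists_unique hpb ⟨φ i, 𝟙 _⟩ ⟨i, 𝟙 _⟩ compat
    obtain ⟨i', w⟩ := p
    have h2' : (Sigma.mk i' (fh i ≫ w) : Σ j, (A.k i ⟶ A.k j)) = ⟨i, 𝟙 _⟩ := h2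
    obtain ⟨rfl, h2''⟩ := Sigma.mk.inj_iff.mp h2'
    rw [heq_iff_eq] at h2''
    have h1' : (Sigma.mk (φ i') (w ≫ fh i') : Σ j, (B.k (φ i') ⟶ B.k j)) = ⟨φ i', 𝟙 _⟩ :=
      (dir_nat α _ i' w).symm.trans h1
    have h1'' := (Sigma.mk.inj_iff.mp h1').2
    rw [heq_iff_eq] at h1''
    exact ⟨w, h1'', h2''⟩
  choose w hw1 hw2 using hexinv
  refine ⟨⟨φ, fun i => ⟨w i, fh i, hw1 i, hw2 i⟩⟩, ?_⟩
  apply Subtype.ext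
  apply NatTrans.ext
  funext X
  apply FintypeCat.hom_ext
  intro x
  obtain ⟨X⟩ := X
  obtain ⟨i, g⟩ := x
  exact (dir_nat α X i g).symm

def cartIsoDir {P Q : FintypeCat.{0}ᵒᵖ ⥤ FintypeCat.{0}} (α : P ≅ Q)
    (hP : IsDirichlet P) (hQ : IsDirichlet Q) :
    (⟨P, hP⟩ : DirCart) ≅ ⟨Q, hQ⟩ where
  hom := ⟨α.hom, cartesian_of_iso α⟩
  inv := ⟨α.inv, cartesian_of_iso α.symm⟩
  hom_inv_id := Subtype.ext α.hom_inv_id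
  inv_hom_id := Subtype.ext α.inv_hom_id

instance : toDir.EssSurj := by
  constructor
  rintro ⟨D, hD⟩
  obtain ⟨I, fI, d, ⟨ι⟩⟩ := hD
  exact ⟨@Bun.mk I fI d, ⟨cartIsoDir ι.symm _ _⟩⟩

instance : toDir.IsEquivalence := { }

end Aux


theorem polyCart_equivalence_dirCart : Nonempty (PolyCart ≌ DirCart) :=
  ⟨toPoly.asEquivalence.symm.trans toDir.asEquivalence⟩
end
end

section
/- The category whose objects are Dirichlet functors and whose morphisms are cartesian natural transformations is equivalent to the category whose objects are functions between finite sets and whose morphisms π → π′ are commutative squares from π to π′ that are pullback squares. -/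
/- STATEMENT 7: The category whose objects are Dirichlet functors and whose morphisms are
cartesian natural transformations is equivalent to the category whose objects are functions
between finite sets and whose morphisms `π → π′` are commutative squares from `π` to `π′`
that are pullback squares. -/

open CategoryTheory CategoryTheory.Limits Opposite

noncomputable section

/-- Objects: functions between finite sets (arrows in `FintypeCat`). -/
structure BunCart where
  arr : Arrow FintypeCat.{0}

/-- The category of functions between finite sets and pullback squares. -/
instance : Category BunCart where
  Hom A B := {f : A.arr ⟶ B.arr // IsPullback f.left A.arr.hom B.arr.hom f.right}
  id A := ⟨𝟙 A.arr, by
    simp only [Arrow.id_left, Arrow.id_right]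
    exact IsPullback.of_horiz_isIso ⟨by simp⟩⟩
  comp f g := ⟨f.1 ≫ g.1, by
    simp only [Arrow.comp_left, Arrow.comp_right]
    exact f.2.paste_horiz g.2⟩
  id_comp f := Subtype.ext (Category.id_comp _)
  comp_id f := Subtype.ext (Category.comp_id _)
  assoc f g h := Subtype.ext (Category.assoc _ _ _)

/-! ### Auxiliary development -/

namespace DirAux

abbrev pt : FintypeCat.{0} := FintypeCat.of PUnit
abbrev emp : FintypeCat.{0} := FintypeCat.of PEmpty

def ι : emp ⟶ pt := FintypeCat.homMk fun e => e.elim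

lemma isPullback_of {P X Y Z : FintypeCat.{0}} (fst : P ⟶ X) (snd : P ⟶ Y) (f : X ⟶ Z)
    (g : Y ⟶ Z) (comm : ∀ p, f (fst p) = g (snd p))
    (uniq : ∀ p q, fst p = fst q → snd p = snd q → p = q)
    (ex : ∀ x y, f x = g y → ∃ p, fst p = x ∧ snd p = y) :
    IsPullback fst snd f g := by
  have w : fst ≫ f = snd ≫ g := FintypeCat.hom_ext _ _ comm
  refine IsPullback.of_isLimit' ⟨w⟩ (PullbackCone.IsLimit.mk w
    (fun s => FintypeCat.homMk fun x => (ex (s.fst x) (s.snd x) (ConcreteCategory.congr_hom s.condition x)).choose) ?_ ?_ ?_)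
  · intro s
    apply FintypeCat.hom_ext; intro x
    exact ((ex (s.fst x) (s.snd x) (ConcreteCategory.congr_hom s.condition x)).choose_spec).1
  · intro s
    apply FintypeCat.hom_ext; intro x
    exact ((ex (s.fst x) (s.snd x) (ConcreteCategory.congr_hom s.condition x)).choose_spec).2
  · intro s m h1 h2
    apply FintypeCat.hom_ext; intro x
    exact uniq _ _
      ((ConcreteCategory.congr_hom h1 x).trans ((ex (s.fst x) (s.snd x) (ConcreteCategory.congr_hom s.condition x)).choose_spec).1.symm)
      ((ConcreteCategory.congr_hom h2 x).trans ((ex (s.fst x) (s.snd x) (ConcreteCategory.congr_hom s.condition x)).choose_spec).2.symm)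

lemma pb_uniq {P X Y Z : FintypeCat.{0}} {fst : P ⟶ X} {snd : P ⟶ Y} {f : X ⟶ Z} {g : Y ⟶ Z}
    (H : IsPullback fst snd f g) (p q : P) (h1 : fst p = fst q) (h2 : snd p = snd q) : p = q := by
  have := PullbackCone.IsLimit.hom_ext H.isLimit
    (k := (FintypeCat.homMk fun _ => p : pt ⟶ P)) (l := (FintypeCat.homMk fun _ => q : pt ⟶ P))
    (FintypeCat.hom_ext _ _ fun _ => h1) (FintypeCat.hom_ext _ _ fun _ => h2)
  exact ConcreteCategory.congr_hom this PUnit.unit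

lemma pb_ex {P X Y Z : FintypeCat.{0}} {fst : P ⟶ X} {snd : P ⟶ Y} {f : X ⟶ Z} {g : Y ⟶ Z}
    (H : IsPullback fst snd f g) (x : X) (y : Y) (h : f x = g y) :
    ∃ p, fst p = x ∧ snd p = y := by
  obtain ⟨l, hl1, hl2⟩ := PullbackCone.IsLimit.lift' H.isLimit
    ((FintypeCat.homMk fun _ => x : pt ⟶ X)) ((FintypeCat.homMk fun _ => y : pt ⟶ Y)) (FintypeCat.hom_ext _ _ fun _ => h)
  exact ⟨l PUnit.unit, ConcreteCategory.congr_hom hl1 PUnit.unit, ConcreteCategory.congr_hom hl2 PUnit.unit⟩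

/-- Naturality squares of natural isomorphisms are pullbacks. -/
lemma iso_cartesian {F G : FintypeCat.{0}ᵒᵖ ⥤ FintypeCat.{0}} (e : F ≅ G) :
    Cartesian e.hom := fun X Y g =>
  IsPullback.of_horiz_isIso ⟨(e.hom.naturality g).symm⟩

section Core

variable {I I' : Type} [Fintype I] [Fintype I'] {d : I → FintypeCat.{0}} {d' : I' → FintypeCat.{0}}

def e0 (d : I → FintypeCat.{0}) (i : I) : (dirichletSum d).obj (op emp) :=
  ⟨i, FintypeCat.homMk fun e => e.elim⟩

def up (d : I → FintypeCat.{0}) (i : I) (a : d i) : (dirichletSum d).obj (op pt) :=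
  ⟨i, FintypeCat.homMk fun _ => a⟩

lemma sig_emp_ext (z w : (dirichletSum d).obj (op emp)) (h : z.1 = w.1) : z = w := by
  obtain ⟨i, g⟩ := z
  obtain ⟨i', g'⟩ := w
  cases h
  exact congrArg (Sigma.mk i) (FintypeCat.hom_ext _ _ fun e => e.elim)

lemma sig_pt_ext (z : (dirichletSum d).obj (op pt)) (i : I) (h : z.1 = i) :
    z = up d i (h ▸ (z.2 PUnit.unit)) := by
  obtain ⟨j, g⟩ := z
  cases h
  exact congrArg (Sigma.mk j) (FintypeCat.hom_ext _ _ fun t => by cases t; rfl)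

lemma mk_eq {J : Type} {c : J → FintypeCat.{0}} {X : FintypeCat.{0}} {j : J} {f g : X ⟶ c j}
    (h : ∀ x, f x = g x) : (⟨j, f⟩ : Σ j, (X ⟶ c j)) = ⟨j, g⟩ :=
  congrArg (Sigma.mk j) (FintypeCat.hom_ext _ _ h)

lemma mk_inj {J : Type} {c : J → FintypeCat.{0}} {X : FintypeCat.{0}} {j : J} {f g : X ⟶ c j}
    (h : (⟨j, f⟩ : Σ j, (X ⟶ c j)) = ⟨j, g⟩) (x : X) : f x = g x :=
  ConcreteCategory.congr_hom (eq_of_heq (Sigma.ext_iff.mp h).2) x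

lemma restr_fst (z : (dirichletSum d).obj (op pt)) :
    (dirichletSum d).map ι.op z = e0 d z.1 :=
  sig_emp_ext _ _ rfl

/-- Separation: an element of a Dirichlet functor is determined by its restrictions along
points and its component. -/
lemma dsum_ext {X : FintypeCatᵒᵖ}
    (z w : (dirichletSum d).obj X) (h1 : z.1 = w.1)
    (h2 : ∀ x : pt ⟶ X.unop, (dirichletSum d).map x.op z = (dirichletSum d).map x.op w) :
    z = w := by
  obtain ⟨i, g⟩ := z
  obtain ⟨i', g'⟩ := w
  cases h1
  refine congrArg (Sigma.mk i) (FintypeCat.hom_ext _ _ fun t => ?_)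
  exact mk_inj (h2 (FintypeCat.homMk fun _ => t)) PUnit.unit

variable {u : (dirichletSum d).obj (op pt) ⟶ (dirichletSum d').obj (op pt)}
  {v : (dirichletSum d).obj (op emp) ⟶ (dirichletSum d').obj (op emp)}

def idx (v : (dirichletSum d).obj (op emp) ⟶ (dirichletSum d').obj (op emp)) (i : I) : I' :=
  (v (e0 d i)).1

lemma hfst (H : IsPullback u ((dirichletSum d).map ι.op) ((dirichletSum d').map ι.op) v)
    (i : I) (a : d i) : (u (up d i a)).1 = idx v i := by
  have h1 : ((dirichletSum d').map ι.op (u (up d i a))).1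
      = (v ((dirichletSum d).map ι.op (up d i a))).1 :=
    congrArg Sigma.fst (ConcreteCategory.congr_hom H.w (up d i a))
  have h2 : (dirichletSum d).map ι.op (up d i a) = e0 d i := restr_fst _
  rw [h2] at h1
  exact h1

def tr (H : IsPullback u ((dirichletSum d).map ι.op) ((dirichletSum d').map ι.op) v)
    (i : I) (a : d i) : d' (idx v i) :=
  (hfst H i a) ▸ ((u (up d i a)).2 PUnit.unit)

lemma u_up (H : IsPullback u ((dirichletSum d).map ι.op) ((dirichletSum d').map ι.op) v)
    (i : I) (a : d i) : u (up d i a) = up d' (idx v i) (tr H i a) :=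
  sig_pt_ext _ _ (hfst H i a)

lemma tr_inj (H : IsPullback u ((dirichletSum d).map ι.op) ((dirichletSum d').map ι.op) v)
    (i : I) (a b : d i) (h : tr H i a = tr H i b) : a = b := by
  have h1 : u (up d i a) = u (up d i b) := by
    rw [u_up H, u_up H, h]
  have h2 : (dirichletSum d).map ι.op (up d i a) = (dirichletSum d).map ι.op (up d i b) :=
    by rw [restr_fst, restr_fst]; rfl
  have h3 := pb_uniq H _ _ h1 h2
  exact mk_inj h3 PUnit.unit

lemma tr_surj (H : IsPullback u ((dirichletSum d).map ι.op) ((dirichletSum d').map ι.op) v)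
    (i : I) (c : d' (idx v i)) : ∃ a, tr H i a = c := by
  have hq : (dirichletSum d').map ι.op (up d' (idx v i) c) = v (e0 d i) :=
    sig_emp_ext _ _ rfl
  obtain ⟨w, hw1, hw2⟩ := pb_ex H _ _ hq
  have hw3 : w.1 = i := congrArg Sigma.fst hw2
  have hw4 : w = up d i (hw3 ▸ (w.2 PUnit.unit)) := sig_pt_ext _ _ hw3
  refine ⟨hw3 ▸ (w.2 PUnit.unit), ?_⟩
  have h5 : u (up d i (hw3 ▸ (w.2 PUnit.unit))) = up d' (idx v i) c := by rw [← hw4]; exact hw1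
  rw [u_up H] at h5
  exact mk_inj h5 PUnit.unit

/-- The cartesian natural transformation between Dirichlet sums induced by a pullback
square between the associated bundles. -/
def fbar (H : IsPullback u ((dirichletSum d).map ι.op) ((dirichletSum d').map ι.op) v) :
    dirichletSum d ⟶ dirichletSum d' where
  app X := FintypeCat.homMk fun z => ⟨idx v z.1, FintypeCat.homMk fun x => tr H z.1 (z.2 x)⟩
  naturality X Y g := rfl

lemma fbar_app_pt (H : IsPullback u ((dirichletSum d).map ι.op) ((dirichletSum d').map ι.op) v) :
    (fbar H).app (op pt) = u := by
  apply FintypeCat.hom_ext; intro z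
  have h : z = up d z.1 (z.2 PUnit.unit) := sig_pt_ext z z.1 rfl
  rw [h, u_up H]
  rfl

lemma fbar_app_emp (H : IsPullback u ((dirichletSum d).map ι.op) ((dirichletSum d').map ι.op) v) :
    (fbar H).app (op emp) = v := by
  apply FintypeCat.hom_ext; intro z
  have h : z = e0 d z.1 := sig_emp_ext _ _ rfl
  rw [h]
  exact sig_emp_ext _ _ rfl

lemma fbar_cartesian
    (H : IsPullback u ((dirichletSum d).map ι.op) ((dirichletSum d').map ι.op) v) :
    Cartesian (fbar H) := by
  intro X Y g
  apply isPullback_of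
  · intro p; rfl
  · intro z w h1 h2
    obtain ⟨i, a⟩ := z
    obtain ⟨i', a'⟩ := w
    have hi : i = i' := congrArg Sigma.fst h2
    cases hi
    exact mk_eq fun x => tr_inj H i _ _ (mk_inj h1 x)
  · intro x y hxy
    obtain ⟨j, k⟩ := x
    obtain ⟨i, b⟩ := y
    have hj : j = idx v i := congrArg Sigma.fst hxy
    cases hj
    refine ⟨⟨i, FintypeCat.homMk fun s => (tr_surj H i (k s)).choose⟩, ?_, ?_⟩
    · exact mk_eq fun s => (tr_surj H i (k s)).choose_spec
    · exact mk_eq fun t => tr_inj H i _ _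
        ((tr_surj H i (k (g.unop t))).choose_spec.trans (mk_inj hxy t))

end Core

/-- The evaluation functor `DirCart ⥤ BunCart`. -/
def ev : DirCart ⥤ BunCart where
  obj D := ⟨Arrow.mk (D.func.map ι.op)⟩
  map {A B} f :=
    ⟨Arrow.homMk (u := f.1.app (op pt)) (v := f.1.app (op emp)) (f.1.naturality ι.op).symm,
      f.2 ι.op⟩
  map_id A := rfl
  map_comp f g := rfl

instance : ev.Faithful where
  map_injective {A B} := by
    rintro ⟨f, hf⟩ ⟨g, hg⟩ h
    obtain ⟨I', fI', d', ⟨e'⟩⟩ := B.isDir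
    letI := fI'
    have hpt : f.app (op pt) = g.app (op pt) := congrArg (fun t => t.1.left) h
    have hemp : f.app (op emp) = g.app (op emp) := congrArg (fun t => t.1.right) h
    apply Subtype.ext
    have key : f ≫ e'.hom = g ≫ e'.hom := by
      apply NatTrans.ext
      funext X; apply FintypeCat.hom_ext; intro z
      have key2 : ∀ (W : FintypeCat.{0}) (hw : f.app (op W) = g.app (op W)) (x : W ⟶ X.unop),
          (dirichletSum d').map x.op ((f ≫ e'.hom).app X z)
            = (dirichletSum d').map x.op ((g ≫ e'.hom).app X z) := by
        intro W hw x
        have e1 : (dirichletSum d').map x.op ((f ≫ e'.hom).app X z)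
            = (f ≫ e'.hom).app (op W) (A.func.map x.op z) :=
          (ConcreteCategory.congr_hom ((f ≫ e'.hom).naturality x.op) z).symm
        have e2 : (dirichletSum d').map x.op ((g ≫ e'.hom).app X z)
            = (g ≫ e'.hom).app (op W) (A.func.map x.op z) :=
          (ConcreteCategory.congr_hom ((g ≫ e'.hom).naturality x.op) z).symm
        rw [e1, e2]
        show e'.hom.app (op W) (f.app (op W) (A.func.map x.op z))
          = e'.hom.app (op W) (g.app (op W) (A.func.map x.op z))
        rw [hw]
      apply dsum_ext
      · have h := congrArg Sigma.fst (key2 emp hemp (FintypeCat.homMk fun e => e.elim))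
        exact h
      · exact fun x => key2 pt hpt x
    have := congrArg (fun t => t ≫ e'.inv) key
    simpa using this

instance : ev.Full where
  map_surjective {A B} t := by
    obtain ⟨I, fI, dA, ⟨eA⟩⟩ := A.isDir
    obtain ⟨I', fI', dB, ⟨eB⟩⟩ := B.isDir
    letI := fI; letI := fI'
    have h2 : IsPullback t.1.left (A.func.map ι.op) (B.func.map ι.op) t.1.right := t.2
    have Hu : IsPullback ((eA.inv.app (op pt) ≫ t.1.left) ≫ eB.hom.app (op pt))
        ((dirichletSum dA).map ι.op) ((dirichletSum dB).map ι.op)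
        ((eA.inv.app (op emp) ≫ t.1.right) ≫ eB.hom.app (op emp)) :=
      ((iso_cartesian eA.symm ι.op).paste_horiz h2).paste_horiz (iso_cartesian eB ι.op)
    have cartφ : Cartesian (eA.hom ≫ fbar Hu ≫ eB.inv) := by
      intro X Y g
      have := ((iso_cartesian eA g).paste_horiz (fbar_cartesian Hu g)).paste_horiz
        (iso_cartesian eB.symm g)
      simpa using this
    refine ⟨⟨eA.hom ≫ fbar Hu ≫ eB.inv, cartφ⟩, Subtype.ext ?_⟩
    apply CommaMorphism.ext
    · show eA.hom.app (op pt) ≫ (fbar Hu).app (op pt) ≫ eB.inv.app (op pt) = t.1.left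
      rw [fbar_app_pt]
      exact (fun {P Q R S : FintypeCat.{0}} (a : P ≅ Q) (f : P ⟶ R) (b : R ≅ S) =>
        (by simp : a.hom ≫ ((a.inv ≫ f) ≫ b.hom) ≫ b.inv = f)) (eA.app (op pt)) t.1.left (eB.app (op pt))
    · show eA.hom.app (op emp) ≫ (fbar Hu).app (op emp) ≫ eB.inv.app (op emp) = t.1.right
      rw [fbar_app_emp]
      exact (fun {P Q R S : FintypeCat.{0}} (a : P ≅ Q) (f : P ⟶ R) (b : R ≅ S) =>
        (by simp : a.hom ≫ ((a.inv ≫ f) ≫ b.hom) ≫ b.inv = f)) (eA.app (op emp)) t.1.right (eB.app (op emp))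

instance : ev.EssSurj where
  mem_essImage B := by
    classical
    set E := B.arr.left with hE
    set Bb := B.arr.right with hBb
    set π := B.arr.hom with hπ
    letI : ∀ b : Bb, Fintype {e : E // π e = b} := fun b => Fintype.ofFinite _
    let d : Bb → FintypeCat.{0} := fun b => FintypeCat.of {e : E // π e = b}
    letI : Fintype Bb := Fintype.ofFinite Bb
    refine ⟨⟨dirichletSum d, ↥Bb, inferInstance, d, ⟨Iso.refl _⟩⟩, ⟨?_⟩⟩
    let α : (dirichletSum d).obj (op pt) ⟶ E := FintypeCat.homMk fun z => (z.2 PUnit.unit).1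
    let α' : E ⟶ (dirichletSum d).obj (op pt) := FintypeCat.homMk fun e => ⟨π e, FintypeCat.homMk fun _ => ⟨e, rfl⟩⟩
    let β : (dirichletSum d).obj (op emp) ⟶ Bb := FintypeCat.homMk fun z => z.1
    let β' : Bb ⟶ (dirichletSum d).obj (op emp) := FintypeCat.homMk fun b => ⟨b, FintypeCat.homMk fun e => e.elim⟩
    have comm : α ≫ π = (dirichletSum d).map ι.op ≫ β :=
      FintypeCat.hom_ext _ _ fun z => (z.2 PUnit.unit).2
    have comm' : α' ≫ (dirichletSum d).map ι.op = π ≫ β' :=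
      FintypeCat.hom_ext _ _ fun e => sig_emp_ext _ _ rfl
    have hαα' : ∀ z, α' (α z) = z := by
      intro z
      obtain ⟨i, g⟩ := z
      rcases hgu : g PUnit.unit with ⟨e, he⟩
      subst he
      show (⟨π (g PUnit.unit).1, FintypeCat.homMk fun _ => ⟨(g PUnit.unit).1, rfl⟩⟩
        : (dirichletSum d).obj (op pt)) = ⟨π e, g⟩
      rw [hgu]
      refine congrArg (Sigma.mk (π e)) (FintypeCat.hom_ext _ _ fun t => ?_)
      cases t
      rw [hgu]; rfl
    have hββ' : ∀ z, β' (β z) = z := fun z => (sig_emp_ext (β' (β z)) z rfl)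
    haveI : IsIso α := ⟨α', FintypeCat.hom_ext _ _ hαα', FintypeCat.hom_ext _ _ fun e => rfl⟩
    haveI : IsIso β := ⟨β', FintypeCat.hom_ext _ _ hββ', FintypeCat.hom_ext _ _ fun b => rfl⟩
    haveI : IsIso α' := ⟨α, FintypeCat.hom_ext _ _ fun e => rfl, FintypeCat.hom_ext _ _ hαα'⟩
    haveI : IsIso β' := ⟨β, FintypeCat.hom_ext _ _ fun b => rfl, FintypeCat.hom_ext _ _ hββ'⟩
    have pb : IsPullback α ((dirichletSum d).map ι.op) B.arr.hom β :=
      IsPullback.of_horiz_isIso ⟨comm⟩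
    have pb' : IsPullback α' B.arr.hom ((dirichletSum d).map ι.op) β' :=
      IsPullback.of_horiz_isIso ⟨comm'⟩
    refine ⟨⟨Arrow.homMk (u := α) (v := β) comm, pb⟩,
      ⟨Arrow.homMk (u := α') (v := β') comm', pb'⟩, ?_, ?_⟩
    · exact Subtype.ext (CommaMorphism.ext (FintypeCat.hom_ext _ _ hαα') (FintypeCat.hom_ext _ _ hββ'))
    · exact Subtype.ext (CommaMorphism.ext (FintypeCat.hom_ext _ _ fun e => rfl) (FintypeCat.hom_ext _ _ fun b => rfl))

end DirAux

theorem dirCart_equivalence_pullbackSquares : Nonempty (DirCart ≌ BunCart) := by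
  have : DirAux.ev.IsEquivalence := {}
  exact ⟨DirAux.ev.asEquivalence⟩
end
end

section
/- Categorical products in Poly agree with the algebraic product of polynomials: for finite coproducts of corepresentables P = ∐_{i ∈ I} Fin(pᵢ, –) and Q = ∐_{j ∈ J} Fin(qⱼ, –), the product P × Q in the functor category FintypeCat ⥤ FintypeCat is isomorphic to ∐_{(i,j) ∈ I × J} Fin(pᵢ + qⱼ, –); in particular the product of two polynomial functors is again a polynomial functor. -/
/- STATEMENT 17: Categorical products in `Poly` agree with the algebraic product of
polynomials: for `P = ∐_{i ∈ I} Fin(pᵢ, –)` and `Q = ∐_{j ∈ J} Fin(qⱼ, –)`, the product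
`P × Q` in the functor category `FintypeCat ⥤ FintypeCat` is isomorphic to
`∐_{(i,j) ∈ I × J} Fin(pᵢ + qⱼ, –)`; in particular the product of two polynomial functors is
again a polynomial functor. -/

open CategoryTheory CategoryTheory.Limits Opposite

noncomputable section

namespace PolyProdAux

variable {I J : Type} [Fintype I] [Fintype J] (p : I → FintypeCat.{0}) (q : J → FintypeCat.{0})

/-- abbreviation for the candidate product. -/
abbrev R : FintypeCat.{0} ⥤ FintypeCat.{0} :=
  polySum (fun ij : I × J => FintypeCat.of (p ij.1 ⊕ q ij.2))

def fstHom : R p q ⟶ polySum p where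
  app X := FintypeCat.homMk (fun x => ⟨x.1.1, FintypeCat.homMk (fun a => x.2 (Sum.inl a))⟩)
  naturality _ _ _ := rfl

def sndHom : R p q ⟶ polySum q where
  app X := FintypeCat.homMk (fun x => ⟨x.1.2, FintypeCat.homMk (fun b => x.2 (Sum.inr b))⟩)
  naturality _ _ _ := rfl

def fan : BinaryFan (polySum p) (polySum q) := BinaryFan.mk (fstHom p q) (sndHom p q)

def liftFan (s : BinaryFan (polySum p) (polySum q)) : s.pt ⟶ R p q where
  app X := FintypeCat.homMk (fun x =>
    ⟨((s.fst.app X x).1, (s.snd.app X x).1),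
      FintypeCat.homMk (Sum.elim (s.fst.app X x).2 (s.snd.app X x).2)⟩)
  naturality X Y f := by
    apply FintypeCat.hom_ext; intro x
    have h1 : s.fst.app Y (s.pt.map f x) = (polySum p).map f (s.fst.app X x) :=
      ConcreteCategory.congr_hom (s.fst.naturality f) x
    have h2 : s.snd.app Y (s.pt.map f x) = (polySum q).map f (s.snd.app X x) :=
      ConcreteCategory.congr_hom (s.snd.naturality f) x
    show (⟨((s.fst.app Y (s.pt.map f x)).1, (s.snd.app Y (s.pt.map f x)).1),
        FintypeCat.homMk (Sum.elim (s.fst.app Y (s.pt.map f x)).2 (s.snd.app Y (s.pt.map f x)).2)⟩ :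
          (R p q).obj Y) =
      (R p q).map f ⟨((s.fst.app X x).1, (s.snd.app X x).1),
        FintypeCat.homMk (Sum.elim (s.fst.app X x).2 (s.snd.app X x).2)⟩
    rw [h1, h2]
    refine Sigma.ext rfl (heq_of_eq ?_)
    apply FintypeCat.hom_ext; intro c
    cases c <;> rfl

def isLimitFan : IsLimit (fan p q) := by
  refine BinaryFan.isLimitMk (liftFan p q)
    (fun s => by apply NatTrans.ext; funext X; apply FintypeCat.hom_ext; intro x; rfl)
    (fun s => by apply NatTrans.ext; funext X; apply FintypeCat.hom_ext; intro x; rfl)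
    (fun s m hm1 hm2 => ?_)
  apply NatTrans.ext; funext X; apply FintypeCat.hom_ext; intro x
  have h1 := ConcreteCategory.congr_hom (congrFun (congrArg NatTrans.app hm1) X) x
  have h2 := ConcreteCategory.congr_hom (congrFun (congrArg NatTrans.app hm2) X) x
  simp only [NatTrans.comp_app, FintypeCat.comp_apply] at h1 h2
  show m.app X x =
    ⟨((s.fst.app X x).1, (s.snd.app X x).1),
      FintypeCat.homMk (Sum.elim (s.fst.app X x).2 (s.snd.app X x).2)⟩
  have key : ∀ (y : (R p q).obj X) (a : (polySum p).obj X) (b : (polySum q).obj X),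
      (fstHom p q).app X y = a → (sndHom p q).app X y = b →
      y = ⟨(a.1, b.1), FintypeCat.homMk (Sum.elim a.2 b.2)⟩ := by
    intro y a b ha hb
    subst ha hb
    obtain ⟨⟨i, j⟩, u⟩ := y
    refine Sigma.ext rfl (heq_of_eq ?_)
    apply FintypeCat.hom_ext; intro c
    cases c <;> rfl
  exact key _ _ _ h1 h2

def prodIso : polySum p ⨯ polySum q ≅ R p q :=
  (limit.isLimit (pair (polySum p) (polySum q))).conePointUniqueUpToIso (isLimitFan p q)

end PolyProdAux

theorem polynomial_products
    {I J : Type} [Fintype I] [Fintype J] (p : I → FintypeCat.{0}) (q : J → FintypeCat.{0}) :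
    Nonempty
      (polySum p ⨯ polySum q ≅
        polySum (fun ij : I × J => FintypeCat.of (p ij.1 ⊕ q ij.2))) ∧
    ∀ (P Q : FintypeCat.{0} ⥤ FintypeCat.{0}),
      IsPolynomial P → IsPolynomial Q → IsPolynomial (P ⨯ Q) := by
  constructor
  · exact ⟨PolyProdAux.prodIso p q⟩
  · rintro P Q ⟨I', _, p', ⟨eP⟩⟩ ⟨J', _, q', ⟨eQ⟩⟩
    refine ⟨I' × J', inferInstance, fun ij => FintypeCat.of (p' ij.1 ⊕ q' ij.2),
      ⟨?_⟩⟩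
    exact (prod.mapIso eP eQ).trans (PolyProdAux.prodIso p' q')
end
end
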